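/- There exists a 2-Lipschitz function g: ℝ → ℝ with g(0) = 0 such that, setting γ(t) = (t, g(t), z(t)) to be the horizontal lift in ℍ of the graph of g, the integral ∫₀^∞ K₄(γ(s)⁻¹·γ(t)) dt = +∞ for every s > 0, where K₄(x,y,z) = z²/‖(x,y,z)‖⁵. In particular, the singular integral operator with kernel K₄ on the 1-Ahlfors regular curve γ is not bounded on L¹. -/

import Mathlib

set_option maxHeartbeats 4000000

noncomputable def Knorm (p : ℝ × ℝ × ℝ) : ℝ :=
  ((p.1 ^ 2 + p.2.1 ^ 2) ^ 2 + p.2.2 ^ 2) ^ ((1 : ℝ) / 4)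

noncomputable def Hmul (p q : ℝ × ℝ × ℝ) : ℝ × ℝ × ℝ :=
  (p.1 + q.1, p.2.1 + q.2.1, p.2.2 + q.2.2 + (p.1 * q.2.1 - p.2.1 * q.1) / 2)

def Hinv (p : ℝ × ℝ × ℝ) : ℝ × ℝ × ℝ := (-p.1, -p.2.1, -p.2.2)

noncomputable def Hdist (p q : ℝ × ℝ × ℝ) : ℝ := Knorm (Hmul (Hinv q) p)

noncomputable def Hdil (r : ℝ) (p : ℝ × ℝ × ℝ) : ℝ × ℝ × ℝ := (r * p.1, r * p.2.1, r ^ 2 * p.2.2)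

open MeasureTheory
open scoped ENNReal

noncomputable def K4 (p : ℝ × ℝ × ℝ) : ℝ := p.2.2 ^ 2 / Knorm p ^ 5

noncomputable def gW (t : ℝ) : ℝ := if 0 < t then t * Real.sin (Real.log t) else 0

noncomputable def zW (t : ℝ) : ℝ :=
  if 0 < t then t ^ 2 * (2 * Real.cos (Real.log t) + Real.sin (Real.log t)) / 10 else 0

lemma gW_pos {t : ℝ} (ht : 0 < t) : gW t = t * Real.sin (Real.log t) := if_pos ht

lemma gW_nonpos {t : ℝ} (ht : t ≤ 0) : gW t = 0 := if_neg (not_lt.mpr ht)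

lemma zW_pos {t : ℝ} (ht : 0 < t) :
    zW t = t ^ 2 * (2 * Real.cos (Real.log t) + Real.sin (Real.log t)) / 10 := if_pos ht

lemma abs_gW_le (t : ℝ) : |gW t| ≤ |t| := by
  rcases lt_or_ge 0 t with ht | ht
  · rw [gW_pos ht, abs_mul]
    calc |t| * |Real.sin (Real.log t)| ≤ |t| * 1 :=
      mul_le_mul_of_nonneg_left (Real.abs_sin_le_one _) (abs_nonneg t)
    _ = |t| := mul_one _
  · rw [gW_nonpos ht]; simp

lemma hasDerivAt_gW {t : ℝ} (ht : 0 < t) :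
    HasDerivAt gW (Real.sin (Real.log t) + Real.cos (Real.log t)) t := by
  have h1 : HasDerivAt (fun u : ℝ => u * Real.sin (Real.log u))
      (1 * Real.sin (Real.log t) + t * (Real.cos (Real.log t) * t⁻¹)) t :=
    (hasDerivAt_id t).mul ((Real.hasDerivAt_log ht.ne').sin)
  have h2 : 1 * Real.sin (Real.log t) + t * (Real.cos (Real.log t) * t⁻¹)
      = Real.sin (Real.log t) + Real.cos (Real.log t) := by
    field_simp
  rw [h2] at h1
  apply h1.congr_of_eventuallyEq
  filter_upwards [Ioi_mem_nhds ht] with u hu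
  exact gW_pos hu

lemma deriv_gW {t : ℝ} (ht : 0 < t) :
    deriv gW t = Real.sin (Real.log t) + Real.cos (Real.log t) := (hasDerivAt_gW ht).deriv

lemma hasDerivAt_zW {t : ℝ} (ht : 0 < t) :
    HasDerivAt zW ((1 / 2) * (t * Real.cos (Real.log t))) t := by
  have h2 : HasDerivAt (fun u : ℝ => u ^ 2) (2 * t) t := by
    simpa using hasDerivAt_pow 2 t
  have hc : HasDerivAt (fun u : ℝ => Real.cos (Real.log u))
      (-Real.sin (Real.log t) * t⁻¹) t := (Real.hasDerivAt_log ht.ne').cos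
  have hsn : HasDerivAt (fun u : ℝ => Real.sin (Real.log u))
      (Real.cos (Real.log t) * t⁻¹) t := (Real.hasDerivAt_log ht.ne').sin
  have hin : HasDerivAt (fun u : ℝ => 2 * Real.cos (Real.log u) + Real.sin (Real.log u))
      (2 * (-Real.sin (Real.log t) * t⁻¹) + Real.cos (Real.log t) * t⁻¹) t :=
    (hc.const_mul 2).add hsn
  have hprod := (h2.mul hin).div_const 10
  have h3 : (2 * t * (2 * Real.cos (Real.log t) + Real.sin (Real.log t)) +
      t ^ 2 * (2 * (-Real.sin (Real.log t) * t⁻¹) + Real.cos (Real.log t) * t⁻¹)) / 10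
      = (1 / 2) * (t * Real.cos (Real.log t)) := by
    field_simp
    ring
  rw [h3] at hprod
  apply hprod.congr_of_eventuallyEq
  filter_upwards [Ioi_mem_nhds ht] with u hu
  exact zW_pos hu

lemma lipschitz_gW : LipschitzWith 2 gW := by
  have hlip : LipschitzOnWith 2 gW (Set.Ioi 0) := by
    apply (convex_Ioi (0:ℝ)).lipschitzOnWith_of_nnnorm_hasDerivWithin_le
      (f' := fun u => Real.sin (Real.log u) + Real.cos (Real.log u))
      (fun x hx => (hasDerivAt_gW hx).hasDerivWithinAt)
    intro x _
    have h1 : |Real.sin (Real.log x) + Real.cos (Real.log x)| ≤ 2 := by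
      calc |Real.sin (Real.log x) + Real.cos (Real.log x)|
          ≤ |Real.sin (Real.log x)| + |Real.cos (Real.log x)| := abs_add_le _ _
        _ ≤ 1 + 1 := add_le_add (Real.abs_sin_le_one _) (Real.abs_cos_le_one _)
        _ = 2 := by norm_num
    rw [← NNReal.coe_le_coe]
    simpa [Real.norm_eq_abs] using h1
  have key : ∀ a b : ℝ, a ≤ b → |gW b - gW a| ≤ 2 * |b - a| := by
    intro a b hab
    rcases le_or_gt b 0 with hb | hb
    · rw [gW_nonpos (hab.trans hb), gW_nonpos hb]
      simp [abs_nonneg]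
    rcases le_or_gt a 0 with ha | ha
    · rw [gW_nonpos ha, sub_zero]
      have h1 : |gW b| ≤ |b| := abs_gW_le b
      have h2 : |b| = b := abs_of_pos hb
      have h3 : |b - a| = b - a := abs_of_pos (by linarith)
      linarith
    · have := (lipschitzOnWith_iff_dist_le_mul.mp hlip) b hb a ha
      simpa [Real.dist_eq] using this
  apply LipschitzWith.of_dist_le_mul
  intro x y
  rcases le_total x y with h | h
  · have := key x y h
    rw [Real.dist_eq, Real.dist_eq, abs_sub_comm (gW x), abs_sub_comm x]
    simpa using this
  · have := key y x h
    rw [Real.dist_eq, Real.dist_eq]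
    simpa using this

lemma key_bound {s t : ℝ} (hs : 0 < s) (hts : 40 * (s + s ^ 2 + 1) ≤ t)
    (hcos : 0 ≤ Real.cos (Real.log t)) (hsin : 0 ≤ Real.sin (Real.log t)) :
    1 / (100000 * t) ≤ K4 (Hmul (Hinv (s, gW s, zW s)) (t, gW t, zW t)) := by
  set c := Real.cos (Real.log t) with hc
  set si := Real.sin (Real.log t) with hsi
  have hc1 : c ≤ 1 := Real.cos_le_one _
  have hsi1 : si ≤ 1 := Real.sin_le_one _
  have ht40 : (40 : ℝ) ≤ t := by nlinarith
  have ht0 : (0 : ℝ) < t := by linarith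
  have ht1 : (1 : ℝ) ≤ t := by linarith
  have hs40 : s ≤ t / 40 := by nlinarith
  have hs2_40 : s ^ 2 ≤ t / 40 := by nlinarith
  have hst : s * t ≤ t ^ 2 / 40 := by nlinarith
  have hgs_le : gW s ≤ s := by
    rw [gW_pos hs]; nlinarith [Real.sin_le_one (Real.log s)]
  have hgs_ge : -s ≤ gW s := by
    rw [gW_pos hs]; nlinarith [Real.neg_one_le_sin (Real.log s)]
  have hzs_le : zW s ≤ t ^ 2 / 40 := by
    rw [zW_pos hs]
    have h1 : s ^ 2 * (2 * Real.cos (Real.log s) + Real.sin (Real.log s)) / 10 ≤ s ^ 2 := by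
      nlinarith [Real.cos_le_one (Real.log s), Real.sin_le_one (Real.log s), sq_nonneg s]
    nlinarith
  have hzs_ge : -(t ^ 2 / 40) ≤ zW s := by
    rw [zW_pos hs]
    have h1 : -(s ^ 2) ≤ s ^ 2 * (2 * Real.cos (Real.log s) + Real.sin (Real.log s)) / 10 := by
      nlinarith [Real.neg_one_le_cos (Real.log s), Real.neg_one_le_sin (Real.log s), sq_nonneg s]
    nlinarith
  have hgt : gW t = t * si := gW_pos ht0
  have hzt : zW t = t ^ 2 * (2 * c + si) / 10 := zW_pos ht0
  have h2csi : 1 ≤ 2 * c + si := by nlinarith [Real.sin_sq_add_cos_sq (Real.log t)]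
  set x : ℝ := -s + t with hxdef
  set y : ℝ := -gW s + gW t with hydef
  set w : ℝ := -zW s + zW t + (-s * gW t - -gW s * t) / 2 with hwdef
  have hK : K4 (Hmul (Hinv (s, gW s, zW s)) (t, gW t, zW t))
      = w ^ 2 / (((x ^ 2 + y ^ 2) ^ 2 + w ^ 2) ^ ((1 : ℝ) / 4)) ^ 5 := by
    simp only [K4, Knorm, Hmul, Hinv, hxdef, hydef, hwdef]
  clear_value c si x y w
  -- bounds on w
  have hgst : gW s * t ≤ t ^ 2 / 40 := by nlinarith
  have hgst' : -(t ^ 2 / 40) ≤ gW s * t := by nlinarith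
  have hsts : s * (t * si) ≤ t ^ 2 / 40 := by nlinarith
  have hsts' : 0 ≤ s * (t * si) := by positivity
  have h10 : t ^ 2 ≤ t ^ 2 * (2 * c + si) := by nlinarith [sq_nonneg t]
  have h11 : t ^ 2 * (2 * c + si) ≤ 3 * t ^ 2 := by nlinarith [sq_nonneg t]
  have hw_low : t ^ 2 / 20 ≤ w := by
    rw [hwdef, hgt, hzt]; linarith
  have hw_hi : w ≤ t ^ 2 := by
    rw [hwdef, hgt, hzt]; linarith
  have hw_pos : 0 < w := lt_of_lt_of_le (by positivity) hw_low
  have hw_sq_low : t ^ 4 / 400 ≤ w ^ 2 := by nlinarith [sq_nonneg (w - t ^ 2 / 20)]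
  have hw_sq_hi : w ^ 2 ≤ t ^ 4 := by nlinarith
  -- bounds on x, y
  have hx_sq : x ^ 2 ≤ t ^ 2 := by
    rw [hxdef]
    nlinarith [mul_nonneg (by linarith : (0:ℝ) ≤ s) (by linarith : (0:ℝ) ≤ 2 * t - s)]
  have hy_hi : y ≤ 2 * t := by
    rw [hydef, hgt]; nlinarith
  have hy_low : -(2 * t) ≤ y := by
    rw [hydef, hgt]; nlinarith
  have hy_sq : y ^ 2 ≤ 4 * t ^ 2 := by
    nlinarith [mul_nonneg (by linarith : (0:ℝ) ≤ 2 * t - y) (by linarith : (0:ℝ) ≤ 2 * t + y)]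
  set A : ℝ := (x ^ 2 + y ^ 2) ^ 2 + w ^ 2 with hAdef
  clear_value A
  have hA_pos : 0 < A := by rw [hAdef]; positivity
  have hA_hi : A ≤ (3 * t) ^ 4 := by
    rw [hAdef]
    have h5 : x ^ 2 + y ^ 2 ≤ 5 * t ^ 2 := by linarith
    have h6 : (x ^ 2 + y ^ 2) ^ 2 ≤ (5 * t ^ 2) ^ 2 :=
      pow_le_pow_left₀ (by positivity) h5 2
    have h7 : (0:ℝ) ≤ t ^ 4 := by positivity
    have h8 : (5 * t ^ 2) ^ 2 = 25 * t ^ 4 := by ring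
    have h9 : (3 * t) ^ 4 = 81 * t ^ 4 := by ring
    rw [h9]; linarith
  have hKn_le : A ^ ((1 : ℝ) / 4) ≤ 3 * t := by
    calc A ^ ((1 : ℝ) / 4) ≤ ((3 * t) ^ 4 : ℝ) ^ ((1 : ℝ) / 4) :=
          Real.rpow_le_rpow hA_pos.le hA_hi (by norm_num)
      _ = 3 * t := by
          rw [← Real.rpow_natCast (3 * t) 4, ← Real.rpow_mul (by positivity)]
          norm_num
  have hKn_pos : 0 < A ^ ((1 : ℝ) / 4) := Real.rpow_pos_of_pos hA_pos _
  have hKn5_le : (A ^ ((1 : ℝ) / 4)) ^ 5 ≤ 243 * t ^ 5 := by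
    calc (A ^ ((1 : ℝ) / 4)) ^ 5 ≤ (3 * t) ^ 5 := pow_le_pow_left₀ hKn_pos.le hKn_le 5
      _ = 243 * t ^ 5 := by ring
  have hKn5_pos : 0 < (A ^ ((1 : ℝ) / 4)) ^ 5 := by positivity
  rw [hK]
  have step1 : 1 / (100000 * t) ≤ (t ^ 4 / 400) / (243 * t ^ 5) := by
    have he : (t ^ 4 / 400) / (243 * t ^ 5) = 1 / (97200 * t) := by
      field_simp
      ring
    rw [he]
    apply one_div_le_one_div_of_le (by positivity) (by linarith)
  have step2 : (t ^ 4 / 400) / (243 * t ^ 5) ≤ w ^ 2 / (A ^ ((1 : ℝ) / 4)) ^ 5 :=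
    div_le_div₀ (sq_nonneg w) hw_sq_low hKn5_pos hKn5_le
  exact le_trans step1 step2

lemma main_aux (s : ℝ) (hs : 0 < s) (F : ℝ → ℝ≥0∞)
    (hF : ∀ t : ℝ, 40 * (s + s ^ 2 + 1) ≤ t → 0 ≤ Real.cos (Real.log t) →
      0 ≤ Real.sin (Real.log t) → ENNReal.ofReal (1 / (100000 * t)) ≤ F t) :
    (∫⁻ t in Set.Ioi (0 : ℝ), F t) = ⊤ := by
  set T : ℝ := 40 * (s + s ^ 2 + 1) with hT
  have hT0 : 0 < T := by positivity
  set n₀ : ℕ := ⌈T⌉₊ with hn₀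
  set a : ℕ → ℝ := fun k => Real.exp (2 * Real.pi * (n₀ + k)) with ha
  set b : ℕ → ℝ := fun k => Real.exp (2 * Real.pi * (n₀ + k) + Real.pi / 2) with hb
  set S : ℕ → Set ℝ := fun k => Set.Ioc (a k) (b k) with hS
  have hpi : (3 : ℝ) < Real.pi := Real.pi_gt_three
  have hTa : ∀ k : ℕ, T ≤ a k := by
    intro k
    have h1 : T ≤ (n₀ : ℝ) := Nat.le_ceil T
    have h2 : (n₀ : ℝ) ≤ 2 * Real.pi * (n₀ + k) := by
      have hk0 : (0:ℝ) ≤ (k:ℝ) := Nat.cast_nonneg k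
      have hn0 : (0:ℝ) ≤ (n₀:ℝ) := Nat.cast_nonneg n₀
      nlinarith
    have h3 : 2 * Real.pi * (n₀ + k) ≤ a k := by
      rw [ha]
      have := Real.add_one_le_exp (2 * Real.pi * (n₀ + k))
      linarith
    linarith
  have hsub : (⋃ k, S k) ⊆ Set.Ioi (0 : ℝ) := by
    intro u hu
    rcases Set.mem_iUnion.mp hu with ⟨k, hk⟩
    exact lt_trans (Real.exp_pos _) hk.1
  have hmeas : ∀ k, MeasurableSet (S k) := fun k => measurableSet_Ioc
  have hdis : Pairwise (Function.onFun Disjoint S) := by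
    have key : ∀ {i j : ℕ}, i < j → Disjoint (S i) (S j) := by
      intro i j hij
      have hba : b i ≤ a j := by
        rw [ha, hb]
        apply Real.exp_le_exp.mpr
        have h1 : (i : ℝ) + 1 ≤ (j : ℝ) := by exact_mod_cast hij
        nlinarith
      rw [hS]
      simp only [Set.Ioc_disjoint_Ioc]
      calc min (b i) (b j) ≤ b i := min_le_left _ _
        _ ≤ a j := hba
        _ ≤ max (a i) (a j) := le_max_right _ _
    intro i j hij
    rcases hij.lt_or_gt with h | h
    · exact key h
    · exact (key h).symm
  have hlower : ∀ k : ℕ, ENNReal.ofReal (1 / 200000) ≤ ∫⁻ t in S k, F t := by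
    intro k
    have hak : 0 < a k := Real.exp_pos _
    have hbk : 0 < b k := Real.exp_pos _
    have hpt : ∀ t ∈ S k, ENNReal.ofReal (1 / (100000 * b k)) ≤ F t := by
      intro t htk
      have hat : a k < t := htk.1
      have htb : t ≤ b k := htk.2
      have ht0 : 0 < t := lt_trans hak hat
      have hTt : T ≤ t := le_trans (hTa k) hat.le
      -- angle facts
      have hl1 : 2 * Real.pi * (n₀ + k) < Real.log t := by
        rw [← Real.log_exp (2 * Real.pi * (n₀ + k))]
        exact Real.log_lt_log (Real.exp_pos _) hat
      have hl2 : Real.log t ≤ 2 * Real.pi * (n₀ + k) + Real.pi / 2 := by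
        rw [← Real.log_exp (2 * Real.pi * (n₀ + k) + Real.pi / 2)]
        exact Real.log_le_log ht0 htb
      set θ : ℝ := Real.log t - 2 * Real.pi * (n₀ + k) with hθ
      have hθ1 : 0 < θ := by rw [hθ]; linarith
      have hθ2 : θ ≤ Real.pi / 2 := by rw [hθ]; linarith
      have hcosθ : Real.cos (Real.log t) = Real.cos θ := by
        have h := Real.cos_add_int_mul_two_pi θ ((n₀ : ℤ) + k)
        rw [← h]
        congr 1
        push_cast
        rw [hθ]; ring
      have hsinθ : Real.sin (Real.log t) = Real.sin θ := by
        have h := Real.sin_add_int_mul_two_pi θ ((n₀ : ℤ) + k)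
        rw [← h]
        congr 1
        push_cast
        rw [hθ]; ring
      have hcos : 0 ≤ Real.cos (Real.log t) := by
        rw [hcosθ]
        exact Real.cos_nonneg_of_mem_Icc ⟨by linarith [Real.pi_pos], hθ2⟩
      have hsin : 0 ≤ Real.sin (Real.log t) := by
        rw [hsinθ]
        exact Real.sin_nonneg_of_nonneg_of_le_pi hθ1.le (by linarith [Real.pi_pos])
      calc ENNReal.ofReal (1 / (100000 * b k)) ≤ ENNReal.ofReal (1 / (100000 * t)) := by
            apply ENNReal.ofReal_le_ofReal
            apply one_div_le_one_div_of_le (by positivity)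
            nlinarith
        _ ≤ F t := hF t hTt hcos hsin
    have hvol : volume (S k) = ENNReal.ofReal (b k - a k) := by
      rw [hS]; simp [Real.volume_Ioc]
    have hba2 : 2 * a k ≤ b k := by
      show 2 * Real.exp (2 * Real.pi * ((n₀:ℝ) + k)) ≤
        Real.exp (2 * Real.pi * ((n₀:ℝ) + k) + Real.pi / 2)
      rw [Real.exp_add]
      have h2 : (2:ℝ) ≤ Real.exp (Real.pi / 2) := by
        have := Real.add_one_le_exp (Real.pi / 2)
        linarith
      nlinarith [Real.exp_pos (2 * Real.pi * ((n₀:ℝ) + k))]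
    calc ENNReal.ofReal (1 / 200000)
        ≤ ENNReal.ofReal (1 / (100000 * b k) * (b k - a k)) := by
          apply ENNReal.ofReal_le_ofReal
          rw [div_mul_eq_mul_div, one_mul, le_div_iff₀ (by positivity)]
          nlinarith
      _ = ENNReal.ofReal (1 / (100000 * b k)) * ENNReal.ofReal (b k - a k) :=
          ENNReal.ofReal_mul (by positivity)
      _ = ENNReal.ofReal (1 / (100000 * b k)) * volume (S k) := by rw [hvol]
      _ = ∫⁻ _ in S k, ENNReal.ofReal (1 / (100000 * b k)) := (setLIntegral_const _ _).symm
      _ ≤ ∫⁻ t in S k, F t := setLIntegral_mono' (hmeas k) hpt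
  rw [eq_top_iff]
  calc (⊤ : ℝ≥0∞) = ∑' _ : ℕ, ENNReal.ofReal (1 / 200000) := by
        rw [ENNReal.tsum_const_eq_top_of_ne_zero]
        simp only [ne_eq, ENNReal.ofReal_eq_zero, not_le]
        norm_num
    _ ≤ ∑' k : ℕ, ∫⁻ t in S k, F t := ENNReal.tsum_le_tsum hlower
    _ = ∫⁻ t in ⋃ k, S k, F t := (lintegral_iUnion hmeas hdis F).symm
    _ ≤ ∫⁻ t in Set.Ioi (0 : ℝ), F t := lintegral_mono_set hsub

/-- There is a `2`-Lipschitz function `g` with `g 0 = 0` such that for its horizontal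
lift `γ(t) = (t, g t, z t)` in `ℍ`, one has `∫₀^∞ K₄(γ(s)⁻¹·γ(t)) dt = ∞` for every
`s > 0`: the SIO with kernel `K₄` fails to be `L¹`-bounded on this Lipschitz curve. -/
theorem stmt12 :
    ∃ g : ℝ → ℝ, LipschitzWith 2 g ∧ g 0 = 0 ∧
      ∃ z : ℝ → ℝ, (∀ t : ℝ, 0 < t →
          HasDerivAt z ((1 / 2) * (t * deriv g t - g t * 1)) t) ∧
        ∀ s : ℝ, 0 < s →
          (∫⁻ t in Set.Ioi (0 : ℝ),
            ENNReal.ofReal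
              (K4 (Hmul (Hinv (s, g s, z s)) (t, g t, z t)))) = ⊤ := by
  refine ⟨gW, lipschitz_gW, gW_nonpos le_rfl, zW, ?_, ?_⟩
  · intro t ht
    have h : (1 / 2 : ℝ) * (t * deriv gW t - gW t * 1)
        = (1 / 2) * (t * Real.cos (Real.log t)) := by
      rw [deriv_gW ht, gW_pos ht]; ring
    rw [h]
    exact hasDerivAt_zW ht
  · intro s hs
    apply main_aux s hs
      (fun t => ENNReal.ofReal (K4 (Hmul (Hinv (s, gW s, zW s)) (t, gW t, zW t))))
    intro t hTt hcos hsin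
    exact ENNReal.ofReal_le_ofReal (key_bound hs hTt hcos hsin)
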